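/- Let 0 < α < β, let g : [α,β] → ℂ be real-valued and continuously differentiable with g(α) = 1 and g(β) = −1, and set M_g = max_{[α,β]} |g| and M_{g′} = max_{[α,β]} |g′|. Let λ ∈ ℝ, c₀ > 0, let y : [α,β] → ℂ be twice continuously differentiable, and let v, z, f : [α,β] → ℂ be continuous with i λ z(x) − y″(x) − c₀ v(x) = f(x) for all x ∈ (α,β). Then |y′(β)|² + |y′(α)|² ≤ M_{g′} ∫_α^β |y′|² dx + 2|λ| M_g (∫_α^β |y′|² dx)^{1/2} (∫_α^β |z|² dx)^{1/2} + 2 c₀ M_g (∫_α^β |y′|² dx)^{1/2} (∫_α^β |v|² dx)^{1/2} + 2 M_g (∫_α^β |f|² dx)^{1/2} (∫_α^β |y′|² dx)^{1/2}. -/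

import Mathlib

open MeasureTheory Complex

lemma cs_aux {a b : ℝ} (hab : a ≤ b) {u w : ℝ → ℂ}
    (hu : ContinuousOn u (Set.Icc a b)) (hw : ContinuousOn w (Set.Icc a b)) :
    ∫ x in a..b, ‖u x‖ * ‖w x‖ ≤
      Real.sqrt (∫ x in a..b, ‖u x‖ ^ 2) * Real.sqrt (∫ x in a..b, ‖w x‖ ^ 2) := by
  have hpq : (2:ℝ).HolderConjugate 2 := Real.HolderConjugate.two_two
  have hIoc : (Set.Ioc a b) ⊆ Set.Icc a b := Set.Ioc_subset_Icc_self
  have hmeas : MeasurableSet (Set.Ioc a b) := measurableSet_Ioc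
  have mem : ∀ (u : ℝ → ℂ), ContinuousOn u (Set.Icc a b) →
      MemLp u (ENNReal.ofReal 2) (volume.restrict (Set.Ioc a b)) := by
    intro u hu
    rw [show ENNReal.ofReal 2 = 2 by simp]
    refine (memLp_two_iff_integrable_sq_norm ?_).2 ?_
    · exact (hu.mono hIoc).aestronglyMeasurable hmeas
    · exact ((hu.norm.pow 2).integrableOn_compact isCompact_Icc).mono_set hIoc
  have key := integral_mul_norm_le_Lp_mul_Lq hpq (mem u hu) (mem w hw)
  rw [intervalIntegral.integral_of_le hab, intervalIntegral.integral_of_le hab,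
    intervalIntegral.integral_of_le hab]
  have h2 : ∀ (c : ℝ → ℂ), (∫ x in Set.Ioc a b, ‖c x‖ ^ (2:ℝ)) = ∫ x in Set.Ioc a b, ‖c x‖ ^ 2 := by
    intro c
    refine setIntegral_congr_fun hmeas fun x _ => ?_
    rw [show (2:ℝ) = ((2:ℕ):ℝ) by norm_num, Real.rpow_natCast]
  have hs : ∀ (c : ℝ → ℂ), (∫ x in Set.Ioc a b, ‖c x‖ ^ (2:ℝ)) ^ (1/(2:ℝ))
      = Real.sqrt (∫ x in Set.Ioc a b, ‖c x‖ ^ 2) := by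
    intro c; rw [h2, Real.sqrt_eq_rpow]
  rw [hs u, hs w] at key
  exact key

lemma normsq_deriv {w : ℝ → ℂ} {w' : ℂ} {x : ℝ} (hw : HasDerivAt w w' x) :
    HasDerivAt (fun t => ‖w t‖ ^ 2) (2 * ((starRingEnd ℂ) (w x) * w').re) x := by
  have hr : HasDerivAt (fun t => (w t).re) w'.re x :=
    Complex.reCLM.hasFDerivAt.comp_hasDerivAt x hw
  have hi : HasDerivAt (fun t => (w t).im) w'.im x :=
    Complex.imCLM.hasFDerivAt.comp_hasDerivAt x hw
  have h : HasDerivAt (fun t => (w t).re ^ 2 + (w t).im ^ 2) _ x := (hr.pow 2).add (hi.pow 2)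
  have heq : (fun t => (w t).re ^ 2 + (w t).im ^ 2) = fun t => ‖w t‖ ^ 2 := by
    funext t
    rw [Complex.sq_norm, Complex.normSq_apply]
    ring
  rw [heq] at h
  convert h using 1
  simp [Complex.mul_re]
  ring

theorem stmt_6 (α β lam c₀ Mg Mg' : ℝ) (hα : 0 < α) (hαβ : α < β) (hc₀ : 0 < c₀)
    (g g' : ℝ → ℝ)
    (hg : ∀ x ∈ Set.Icc α β, HasDerivAt g (g' x) x)
    (hg'c : ContinuousOn g' (Set.Icc α β))
    (hgα : g α = 1) (hgβ : g β = -1)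
    (hMg : IsGreatest ((fun x => |g x|) '' Set.Icc α β) Mg)
    (hMg' : IsGreatest ((fun x => |g' x|) '' Set.Icc α β) Mg')
    (y y' y'' v z f : ℝ → ℂ)
    (hy : ∀ x ∈ Set.Icc α β, HasDerivAt y (y' x) x)
    (hy' : ∀ x ∈ Set.Icc α β, HasDerivAt y' (y'' x) x)
    (hy''c : ContinuousOn y'' (Set.Icc α β))
    (hvc : ContinuousOn v (Set.Icc α β))
    (hzc : ContinuousOn z (Set.Icc α β))
    (hfc : ContinuousOn f (Set.Icc α β))
    (heq : ∀ x ∈ Set.Ioo α β,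
      Complex.I * (lam : ℂ) * z x - y'' x - (c₀ : ℂ) * v x = f x) :
    ‖y' β‖ ^ 2 + ‖y' α‖ ^ 2 ≤
      Mg' * (∫ x in α..β, ‖y' x‖ ^ 2)
        + 2 * |lam| * Mg * Real.sqrt (∫ x in α..β, ‖y' x‖ ^ 2)
            * Real.sqrt (∫ x in α..β, ‖z x‖ ^ 2)
        + 2 * c₀ * Mg * Real.sqrt (∫ x in α..β, ‖y' x‖ ^ 2)
            * Real.sqrt (∫ x in α..β, ‖v x‖ ^ 2)
        + 2 * Mg * Real.sqrt (∫ x in α..β, ‖f x‖ ^ 2)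
            * Real.sqrt (∫ x in α..β, ‖y' x‖ ^ 2) := by
  have hab : α ≤ β := le_of_lt hαβ
  have hαmem : α ∈ Set.Icc α β := ⟨le_refl _, hab⟩
  have hβmem : β ∈ Set.Icc α β := ⟨hab, le_refl _⟩
  have huIcc : Set.uIcc α β = Set.Icc α β := Set.uIcc_of_le hab
  have hIooIcc : Set.Ioo α β ⊆ Set.Icc α β := Set.Ioo_subset_Icc_self
  -- continuity
  have hgc : ContinuousOn g (Set.Icc α β) :=
    fun x hx => (hg x hx).continuousAt.continuousWithinAt
  have hy'c : ContinuousOn y' (Set.Icc α β) :=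
    fun x hx => (hy' x hx).continuousAt.continuousWithinAt
  -- bounds on g, g'
  have hgb : ∀ x ∈ Set.Icc α β, |g x| ≤ Mg := fun x hx => hMg.2 ⟨x, hx, rfl⟩
  have hg'b : ∀ x ∈ Set.Icc α β, |g' x| ≤ Mg' := fun x hx => hMg'.2 ⟨x, hx, rfl⟩
  have hMg0 : 0 ≤ Mg := le_trans (abs_nonneg _) (hgb α hαmem)
  have hMg'0 : 0 ≤ Mg' := le_trans (abs_nonneg _) (hg'b α hαmem)
  -- the derivative of h = g * ‖y'‖²
  set D : ℝ → ℝ := fun x => g' x * ‖y' x‖ ^ 2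
      + g x * (2 * ((starRingEnd ℂ) (y' x) * y'' x).re) with hD
  have hRec : ContinuousOn (fun x => 2 * ((starRingEnd ℂ) (y' x) * y'' x).re)
      (Set.Icc α β) := by
    refine continuousOn_const.mul ?_
    have hc : ContinuousOn (fun x => (starRingEnd ℂ) (y' x) * y'' x) (Set.Icc α β) :=
      (hy'c.star).mul hy''c
    exact fun x hx => (Complex.continuous_re.continuousAt.comp_continuousWithinAt (hc x hx))
  have hDc : ContinuousOn D (Set.Icc α β) :=
    (hg'c.mul (hy'c.norm.pow 2)).add (hgc.mul hRec)
  have hft : ∫ x in α..β, D x = g β * ‖y' β‖ ^ 2 - g α * ‖y' α‖ ^ 2 := by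
    refine intervalIntegral.integral_eq_sub_of_hasDerivAt
      (f := fun x => g x * ‖y' x‖ ^ 2) (fun x hx => ?_) ?_
    · rw [huIcc] at hx
      exact (hg x hx).mul (normsq_deriv (hy' x hx))
    · rw [intervalIntegrable_iff_integrableOn_Ioc_of_le hab]
      exact (hDc.integrableOn_compact isCompact_Icc).mono_set Set.Ioc_subset_Icc_self
  rw [hgα, hgβ] at hft
  have hsum : ‖y' β‖ ^ 2 + ‖y' α‖ ^ 2 = ∫ x in α..β, -D x := by
    rw [intervalIntegral.integral_neg, hft]; ring
  -- bound on ‖y''‖ in the interior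
  have hy''b : ∀ x ∈ Set.Ioo α β,
      ‖y'' x‖ ≤ |lam| * ‖z x‖ + c₀ * ‖v x‖ + ‖f x‖ := by
    intro x hx
    have he : y'' x = Complex.I * (lam : ℂ) * z x - (c₀ : ℂ) * v x - f x := by
      have := heq x hx; linear_combination -this
    rw [he]
    have h1 : ‖Complex.I * (lam : ℂ) * z x‖ = |lam| * ‖z x‖ := by
      simp [norm_mul, Complex.norm_real]
    have h2 : ‖(c₀ : ℂ) * v x‖ = c₀ * ‖v x‖ := by
      simp [norm_mul, Complex.norm_real, abs_of_pos hc₀]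
    calc ‖Complex.I * (lam : ℂ) * z x - (c₀ : ℂ) * v x - f x‖
        ≤ ‖Complex.I * (lam : ℂ) * z x - (c₀ : ℂ) * v x‖ + ‖f x‖ := norm_sub_le _ _
      _ ≤ ‖Complex.I * (lam : ℂ) * z x‖ + ‖(c₀ : ℂ) * v x‖ + ‖f x‖ := by
          gcongr; exact norm_sub_le _ _
      _ = |lam| * ‖z x‖ + c₀ * ‖v x‖ + ‖f x‖ := by rw [h1, h2]
  -- the bounding function
  set B : ℝ → ℝ := fun x => Mg' * ‖y' x‖ ^ 2
      + 2 * |lam| * Mg * (‖z x‖ * ‖y' x‖)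
      + 2 * c₀ * Mg * (‖v x‖ * ‖y' x‖)
      + 2 * Mg * (‖f x‖ * ‖y' x‖) with hB
  have hpt : ∀ x ∈ Set.Ioo α β, -D x ≤ B x := by
    intro x hx
    have hx' := hIooIcc hx
    have hganorm := hgb x hx'
    have hg'anorm := hg'b x hx'
    have hRe : |((starRingEnd ℂ) (y' x) * y'' x).re| ≤ ‖y' x‖ * ‖y'' x‖ := by
      calc |((starRingEnd ℂ) (y' x) * y'' x).re|
          ≤ ‖(starRingEnd ℂ) (y' x) * y'' x‖ := Complex.abs_re_le_norm _
        _ = ‖y' x‖ * ‖y'' x‖ := by rw [norm_mul, RCLike.norm_conj]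
    have h1 : -(g' x * ‖y' x‖ ^ 2) ≤ Mg' * ‖y' x‖ ^ 2 := by
      have := neg_abs_le (g' x)
      nlinarith [sq_nonneg (‖y' x‖), abs_nonneg (g' x)]
    have h2 : -(g x * (2 * ((starRingEnd ℂ) (y' x) * y'' x).re))
        ≤ Mg * (2 * (‖y' x‖ * ‖y'' x‖)) := by
      calc -(g x * (2 * ((starRingEnd ℂ) (y' x) * y'' x).re))
          ≤ |g x * (2 * ((starRingEnd ℂ) (y' x) * y'' x).re)| := neg_le_abs _
        _ = |g x| * (2 * |((starRingEnd ℂ) (y' x) * y'' x).re|) := by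
            rw [abs_mul, abs_mul, _root_.abs_two]
        _ ≤ Mg * (2 * (‖y' x‖ * ‖y'' x‖)) :=
            mul_le_mul hganorm (by linarith [hRe]) (by positivity) hMg0
    have h3 := hy''b x hx
    have hy'n : (0:ℝ) ≤ ‖y' x‖ := norm_nonneg _
    have h4 : Mg * (2 * (‖y' x‖ * ‖y'' x‖))
        ≤ Mg * (2 * (‖y' x‖ * (|lam| * ‖z x‖ + c₀ * ‖v x‖ + ‖f x‖))) := by
      gcongr
    simp only [hD, hB, neg_add]
    have : -(g' x * ‖y' x‖ ^ 2) + -(g x * (2 * ((starRingEnd ℂ) (y' x) * y'' x).re))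
        ≤ Mg' * ‖y' x‖ ^ 2 + Mg * (2 * (‖y' x‖ * (|lam| * ‖z x‖ + c₀ * ‖v x‖ + ‖f x‖))) :=
      add_le_add h1 (le_trans h2 h4)
    calc -(g' x * ‖y' x‖ ^ 2) + -(g x * (2 * ((starRingEnd ℂ) (y' x) * y'' x).re))
        ≤ Mg' * ‖y' x‖ ^ 2 + Mg * (2 * (‖y' x‖ * (|lam| * ‖z x‖ + c₀ * ‖v x‖ + ‖f x‖))) := this
      _ = Mg' * ‖y' x‖ ^ 2 + 2 * |lam| * Mg * (‖z x‖ * ‖y' x‖)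
          + 2 * c₀ * Mg * (‖v x‖ * ‖y' x‖) + 2 * Mg * (‖f x‖ * ‖y' x‖) := by ring
  -- integrate the pointwise bound
  have hBc : ContinuousOn B (Set.Icc α β) := by
    refine (((continuousOn_const.mul (hy'c.norm.pow 2)).add
      (continuousOn_const.mul (hzc.norm.mul hy'c.norm))).add
      (continuousOn_const.mul (hvc.norm.mul hy'c.norm))).add
      (continuousOn_const.mul (hfc.norm.mul hy'c.norm))
  have hmono : ∫ x in α..β, -D x ≤ ∫ x in α..β, B x := by
    rw [intervalIntegral.integral_of_le hab, intervalIntegral.integral_of_le hab,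
      MeasureTheory.integral_Ioc_eq_integral_Ioo, MeasureTheory.integral_Ioc_eq_integral_Ioo]
    refine setIntegral_mono_on ?_ ?_ measurableSet_Ioo hpt
    · exact ((hDc.neg.integrableOn_compact isCompact_Icc).mono_set hIooIcc)
    · exact ((hBc.integrableOn_compact isCompact_Icc).mono_set hIooIcc)
  -- compute the integral of B
  have ii : ∀ (u : ℝ → ℝ), ContinuousOn u (Set.Icc α β) →
      IntervalIntegrable u volume α β := by
    intro u hu
    rw [intervalIntegrable_iff_integrableOn_Ioc_of_le hab]
    exact (hu.integrableOn_compact isCompact_Icc).mono_set Set.Ioc_subset_Icc_self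
  have i1 := ii (fun x => Mg' * ‖y' x‖ ^ 2) (continuousOn_const.mul (hy'c.norm.pow 2) :
    ContinuousOn (fun x => Mg' * ‖y' x‖ ^ 2) _)
  have i2 := ii (fun x => (2 * |lam| * Mg) * (‖z x‖ * ‖y' x‖)) (continuousOn_const.mul (hzc.norm.mul hy'c.norm) :
    ContinuousOn (fun x => (2 * |lam| * Mg) * (‖z x‖ * ‖y' x‖)) _)
  have i3 := ii (fun x => (2 * c₀ * Mg) * (‖v x‖ * ‖y' x‖)) (continuousOn_const.mul (hvc.norm.mul hy'c.norm) :
    ContinuousOn (fun x => (2 * c₀ * Mg) * (‖v x‖ * ‖y' x‖)) _)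
  have i4 := ii (fun x => (2 * Mg) * (‖f x‖ * ‖y' x‖)) (continuousOn_const.mul (hfc.norm.mul hy'c.norm) :
    ContinuousOn (fun x => (2 * Mg) * (‖f x‖ * ‖y' x‖)) _)
  have hBsplit : ∫ x in α..β, B x
      = Mg' * (∫ x in α..β, ‖y' x‖ ^ 2)
        + 2 * |lam| * Mg * (∫ x in α..β, ‖z x‖ * ‖y' x‖)
        + 2 * c₀ * Mg * (∫ x in α..β, ‖v x‖ * ‖y' x‖)
        + 2 * Mg * (∫ x in α..β, ‖f x‖ * ‖y' x‖) := by
    simp only [hB]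
    rw [intervalIntegral.integral_add ((i1.add i2).add i3) i4,
      intervalIntegral.integral_add (i1.add i2) i3,
      intervalIntegral.integral_add i1 i2,
      intervalIntegral.integral_const_mul, intervalIntegral.integral_const_mul,
      intervalIntegral.integral_const_mul, intervalIntegral.integral_const_mul]
  -- Cauchy–Schwarz
  have cz := cs_aux hab hzc hy'c
  have cv := cs_aux hab hvc hy'c
  have cf := cs_aux hab hfc hy'c
  have hfinal : ∫ x in α..β, B x ≤
      Mg' * (∫ x in α..β, ‖y' x‖ ^ 2)
        + 2 * |lam| * Mg * Real.sqrt (∫ x in α..β, ‖y' x‖ ^ 2)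
            * Real.sqrt (∫ x in α..β, ‖z x‖ ^ 2)
        + 2 * c₀ * Mg * Real.sqrt (∫ x in α..β, ‖y' x‖ ^ 2)
            * Real.sqrt (∫ x in α..β, ‖v x‖ ^ 2)
        + 2 * Mg * Real.sqrt (∫ x in α..β, ‖f x‖ ^ 2)
            * Real.sqrt (∫ x in α..β, ‖y' x‖ ^ 2) := by
    rw [hBsplit]
    have e1 : 2 * |lam| * Mg * Real.sqrt (∫ x in α..β, ‖y' x‖ ^ 2)
        * Real.sqrt (∫ x in α..β, ‖z x‖ ^ 2)
        = 2 * |lam| * Mg * (Real.sqrt (∫ x in α..β, ‖z x‖ ^ 2)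
            * Real.sqrt (∫ x in α..β, ‖y' x‖ ^ 2)) := by ring
    have e2 : 2 * c₀ * Mg * Real.sqrt (∫ x in α..β, ‖y' x‖ ^ 2)
        * Real.sqrt (∫ x in α..β, ‖v x‖ ^ 2)
        = 2 * c₀ * Mg * (Real.sqrt (∫ x in α..β, ‖v x‖ ^ 2)
            * Real.sqrt (∫ x in α..β, ‖y' x‖ ^ 2)) := by ring
    have e3 : 2 * Mg * Real.sqrt (∫ x in α..β, ‖f x‖ ^ 2)
        * Real.sqrt (∫ x in α..β, ‖y' x‖ ^ 2)
        = 2 * Mg * (Real.sqrt (∫ x in α..β, ‖f x‖ ^ 2)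
            * Real.sqrt (∫ x in α..β, ‖y' x‖ ^ 2)) := by ring
    rw [e1, e2, e3]
    gcongr <;> positivity
  calc ‖y' β‖ ^ 2 + ‖y' α‖ ^ 2 = ∫ x in α..β, -D x := hsum
    _ ≤ ∫ x in α..β, B x := hmono
    _ ≤ _ := hfinal
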